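/- The group Ĝ₃ of 3×3 matrices over ℤ/3 satisfying Lᵀ diag(1,-(-1),0) L = diag(1,1,0) and det L = 1 (i.e., with v = -1) has a commutator subgroup [Ĝ₃,Ĝ₃] of order 18, and the abelianization Ĝ₃/[Ĝ₃,Ĝ₃] is isomorphic to ℤ/2 × ℤ/2. -/

import Mathlib

open Matrix

/-- The group `Ĝ₃ = SO(3)₃ mod 3` (with `v = -1`, so `-v = 1`). -/
abbrev Ghat3 : Type :=
  {L : Matrix (Fin 3) (Fin 3) (ZMod 3) //
    Lᵀ * Matrix.diagonal ![1, 1, 0] * L = Matrix.diagonal ![1, 1, 0] ∧ L.det = 1}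

namespace GhatAux

instance grp : Group Ghat3 where
  one := ⟨1, by simp⟩
  mul x y := ⟨x.val * y.val, by
    obtain ⟨hx, hx'⟩ := x.prop
    obtain ⟨hy, hy'⟩ := y.prop
    refine ⟨?_, by rw [Matrix.det_mul, hx', hy', one_mul]⟩
    calc (x.val * y.val)ᵀ * Matrix.diagonal ![1,1,0] * (x.val * y.val)
        = y.valᵀ * (x.valᵀ * Matrix.diagonal ![1,1,0] * x.val) * y.val := by
          rw [Matrix.transpose_mul]; noncomm_ring
      _ = _ := by rw [hx, hy]⟩
  inv x := ⟨x.val.adjugate, by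
    obtain ⟨hx, hx'⟩ := x.prop
    have h1 : x.val * x.val.adjugate = 1 := by rw [Matrix.mul_adjugate, hx', one_smul]
    have h2 : x.val.adjugate * x.val = 1 := by rw [Matrix.adjugate_mul, hx', one_smul]
    constructor
    · calc x.val.adjugateᵀ * Matrix.diagonal ![1,1,0] * x.val.adjugate
          = x.val.adjugateᵀ * (x.valᵀ * Matrix.diagonal ![1,1,0] * x.val) * x.val.adjugate := by
            rw [hx]
      _ = (x.val * x.val.adjugate)ᵀ * Matrix.diagonal ![1,1,0] * (x.val * x.val.adjugate) := by
            rw [Matrix.transpose_mul]; noncomm_ring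
      _ = _ := by rw [h1]; simp
    · have := congrArg Matrix.det h2
      rw [Matrix.det_mul, hx', mul_one, Matrix.det_one] at this
      exact this⟩
  mul_assoc x y z := Subtype.ext (mul_assoc _ _ _)
  one_mul x := Subtype.ext (one_mul _)
  mul_one x := Subtype.ext (mul_one _)
  inv_mul_cancel x := Subtype.ext (by
    show x.val.adjugate * x.val = 1
    rw [Matrix.adjugate_mul, x.prop.2, one_smul])

lemma one_val : (1 : Ghat3).val = 1 := rfl
lemma mul_val (x y : Ghat3) : (x * y).val = x.val * y.val := rfl

lemma struct (L : Matrix (Fin 3) (Fin 3) (ZMod 3))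
    (h : Lᵀ * Matrix.diagonal ![1, 1, 0] * L = Matrix.diagonal ![1, 1, 0])
    (hd : L.det = 1) :
    L 0 2 = 0 ∧ L 1 2 = 0 ∧ L 2 2 ≠ 0 ∧
      ((L 0 0 = 0 ∧ L 0 1 ≠ 0 ∧ L 1 0 ≠ 0 ∧ L 1 1 = 0) ∨
       (L 0 0 ≠ 0 ∧ L 0 1 = 0 ∧ L 1 0 = 0 ∧ L 1 1 ≠ 0)) := by
  have e00 := congrFun (congrFun h 0) 0
  have e01 := congrFun (congrFun h 0) 1
  have e11 := congrFun (congrFun h 1) 1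
  have e22 := congrFun (congrFun h 2) 2
  simp [Matrix.mul_apply, Fin.sum_univ_three, Matrix.diagonal,
    Matrix.transpose_apply] at e00 e01 e11 e22
  have sq0 : ∀ a b : ZMod 3, a * a + b * b = 0 → a = 0 ∧ b = 0 := by decide
  have h02 := sq0 (L 0 2) (L 1 2) (by linear_combination e22)
  rw [Matrix.det_fin_three] at hd
  have orth : ∀ a b c d : ZMod 3, a*a+c*c=1 → b*b+d*d=1 → a*b+c*d=0 →
      ((a=0 ∧ b≠0 ∧ c≠0 ∧ d=0) ∨ (a≠0 ∧ b=0 ∧ c=0 ∧ d≠0)) := by decide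
  refine ⟨h02.1, h02.2, ?_, orth (L 0 0) (L 0 1) (L 1 0) (L 1 1)
    (by linear_combination e00) (by linear_combination e11) (by linear_combination e01)⟩
  intro h22
  rw [h02.1, h02.2, h22] at hd
  simp at hd

def fraw (x : Ghat3) : Multiplicative (ZMod 2 × ZMod 2) := Multiplicative.ofAdd
    ((if x.val 2 2 = 1 then 0 else 1), (if x.val 0 0 = 0 then 1 else 0))

lemma fraw_mul (x y : Ghat3) : fraw (x * y) = fraw x * fraw y := by
  obtain ⟨hx02, hx12, hx22, hxA⟩ := struct x.val x.prop.1 x.prop.2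
  obtain ⟨hy02, hy12, hy22, hyA⟩ := struct y.val y.prop.1 y.prop.2
  have p22 : (x * y).val 2 2 = x.val 2 2 * y.val 2 2 := by
    rw [mul_val]
    simp [Matrix.mul_apply, Fin.sum_univ_three, hy02, hy12]
  have p00 : (x * y).val 0 0 = x.val 0 0 * y.val 0 0 + x.val 0 1 * y.val 1 0 := by
    rw [mul_val]
    simp [Matrix.mul_apply, Fin.sum_univ_three, hx02]
  have gmul : ∀ a b : ZMod 3, a ≠ 0 → b ≠ 0 →
      (if a * b = 1 then (0 : ZMod 2) else 1) =
        (if a = 1 then 0 else 1) + (if b = 1 then 0 else 1) := by decide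
  have hmul : ∀ a b a' c' : ZMod 3,
      ((a = 0 ∧ b ≠ 0) ∨ (a ≠ 0 ∧ b = 0)) → ((a' = 0 ∧ c' ≠ 0) ∨ (a' ≠ 0 ∧ c' = 0)) →
      (if a * a' + b * c' = 0 then (1 : ZMod 2) else 0) =
        (if a = 0 then 1 else 0) + (if a' = 0 then 1 else 0) := by decide
  unfold fraw
  rw [← ofAdd_add]
  congr 1
  refine Prod.ext ?_ ?_
  · show (if (x*y).val 2 2 = 1 then (0:ZMod 2) else 1) = _
    rw [p22]
    exact gmul _ _ hx22 hy22
  · show (if (x*y).val 0 0 = 0 then (1:ZMod 2) else 0) = _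
    rw [p00]
    refine hmul _ _ _ _ ?_ ?_
    · rcases hxA with ⟨h1,h2,_,_⟩|⟨h1,h2,_,_⟩
      · exact Or.inl ⟨h1,h2⟩
      · exact Or.inr ⟨h1,h2⟩
    · rcases hyA with ⟨h1,_,h3,_⟩|⟨h1,_,h3,_⟩
      · exact Or.inl ⟨h1,h3⟩
      · exact Or.inr ⟨h1,h3⟩

def f : Ghat3 →* Multiplicative (ZMod 2 × ZMod 2) := MonoidHom.mk' fraw fraw_mul

lemma mem_ker_iff (x : Ghat3) :
    x ∈ MonoidHom.ker f ↔ (x.val 2 2 = 1 ∧ x.val 0 0 ≠ 0) := by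
  rw [MonoidHom.mem_ker]
  show fraw x = 1 ↔ _
  unfold fraw
  rw [show (1 : Multiplicative (ZMod 2 × ZMod 2)) = Multiplicative.ofAdd 0 from rfl]
  rw [Equiv.apply_eq_iff_eq, Prod.ext_iff]
  constructor
  · rintro ⟨ha, hb⟩
    constructor
    · by_contra hc
      rw [if_neg hc] at ha
      exact one_ne_zero ha
    · intro hc
      rw [if_pos hc] at hb
      exact one_ne_zero hb
  · rintro ⟨h1, h2⟩
    rw [if_pos h1, if_neg h2]
    exact ⟨rfl, rfl⟩

/-- Full entry description of kernel elements. -/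
lemma ker_char (x : Ghat3) (h22 : x.val 2 2 = 1) (h00 : x.val 0 0 ≠ 0) :
    x.val = !![x.val 0 0, 0, 0; 0, x.val 0 0, 0; x.val 2 0, x.val 2 1, 1] ∧
      x.val 0 0 * x.val 0 0 = 1 := by
  obtain ⟨h02, h12, _, hA⟩ := struct x.val x.prop.1 x.prop.2
  rcases hA with ⟨h1, _, _, _⟩ | ⟨_, h01, h10, _⟩
  · exact absurd h1 h00
  have e00 := congrFun (congrFun x.prop.1 0) 0
  simp [Matrix.mul_apply, Fin.sum_univ_three, Matrix.diagonal, Matrix.transpose_apply] at e00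
  have hdet := x.prop.2
  rw [Matrix.det_fin_three] at hdet
  rw [h02, h12, h01, h10, h22] at hdet
  have hsq : x.val 0 0 * x.val 0 0 = 1 := by rw [h10] at e00; linear_combination e00
  have h11 : x.val 1 1 = x.val 0 0 := by
    have cancel : ∀ a b : ZMod 3, a * a = 1 → a * b = 1 → b = a := by decide
    exact cancel _ _ hsq (by linear_combination hdet)
  refine ⟨?_, hsq⟩
  ext i j
  fin_cases i <;> fin_cases j <;>
    simp [h02, h12, h01, h10, h11, h22]

lemma family_cond : ∀ d p q : ZMod 3, d * d = 1 →
    (!![d,0,0;0,d,0;p,q,1] : Matrix (Fin 3) (Fin 3) (ZMod 3))ᵀ * Matrix.diagonal ![1,1,0] *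
      !![d,0,0;0,d,0;p,q,1] = Matrix.diagonal ![1,1,0] ∧
    (!![d,0,0;0,d,0;p,q,1] : Matrix (Fin 3) (Fin 3) (ZMod 3)).det = 1 := by decide

open scoped commutatorElement in
lemma mem_comm_of (x a b : Ghat3) (h : x.val * (b.val * a.val) = a.val * b.val) :
    x ∈ commutator Ghat3 := by
  have h' : x * (b * a) = a * b := Subtype.ext (by rw [mul_val, mul_val, mul_val]; exact h)
  have hx : x = ⁅a, b⁆ := by
    have h2 : x = a * b * (b * a)⁻¹ := by rw [← h']; group
    rw [commutatorElement_def, h2]; group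
  rw [hx, commutator_def]
  exact Subgroup.commutator_mem_commutator (Subgroup.mem_top a) (Subgroup.mem_top b)

lemma ker_le_commutator : MonoidHom.ker f ≤ commutator Ghat3 := by
  intro x hx
  obtain ⟨h22, h00⟩ := (mem_ker_iff x).mp hx
  obtain ⟨hval, hsq⟩ := ker_char x h22 h00
  have hdisj : x.val 0 0 = 1 ∨ x.val 0 0 = 2 :=
    (by decide : ∀ a : ZMod 3, a * a = 1 → a = 1 ∨ a = 2) _ hsq
  have hp : x.val 2 0 = 0 ∨ x.val 2 0 = 1 ∨ x.val 2 0 = 2 :=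
    (by decide : ∀ a : ZMod 3, a = 0 ∨ a = 1 ∨ a = 2) _
  have hq : x.val 2 1 = 0 ∨ x.val 2 1 = 1 ∨ x.val 2 1 = 2 :=
    (by decide : ∀ a : ZMod 3, a = 0 ∨ a = 1 ∨ a = 2) _
  rcases hdisj with h1 | h1
  · rcases hp with h2 | h2 | h2
    · rcases hq with h3 | h3 | h3
      · rw [h1, h2, h3] at hval
        exact mem_comm_of x ⟨!![0,1,0;1,0,0;0,0,2], by decide⟩ ⟨!![0,1,0;1,0,0;0,0,2], by decide⟩ (by rw [hval]; decide)
      · rw [h1, h2, h3] at hval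
        exact mem_comm_of x ⟨!![0,1,0;1,0,0;0,1,2], by decide⟩ ⟨!![0,2,0;2,0,0;0,2,2], by decide⟩ (by rw [hval]; decide)
      · rw [h1, h2, h3] at hval
        exact mem_comm_of x ⟨!![0,1,0;1,0,0;0,2,2], by decide⟩ ⟨!![0,2,0;2,0,0;0,1,2], by decide⟩ (by rw [hval]; decide)
    · rcases hq with h3 | h3 | h3
      · rw [h1, h2, h3] at hval
        exact mem_comm_of x ⟨!![0,1,0;1,0,0;0,2,2], by decide⟩ ⟨!![0,2,0;2,0,0;0,2,2], by decide⟩ (by rw [hval]; decide)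
      · rw [h1, h2, h3] at hval
        exact mem_comm_of x ⟨!![0,1,0;1,0,0;0,0,2], by decide⟩ ⟨!![0,1,0;1,0,0;0,2,2], by decide⟩ (by rw [hval]; decide)
      · rw [h1, h2, h3] at hval
        exact mem_comm_of x ⟨!![0,1,0;1,0,0;0,1,2], by decide⟩ ⟨!![0,2,0;2,0,0;0,0,2], by decide⟩ (by rw [hval]; decide)
    · rcases hq with h3 | h3 | h3
      · rw [h1, h2, h3] at hval
        exact mem_comm_of x ⟨!![0,1,0;1,0,0;0,1,2], by decide⟩ ⟨!![0,2,0;2,0,0;0,1,2], by decide⟩ (by rw [hval]; decide)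
      · rw [h1, h2, h3] at hval
        exact mem_comm_of x ⟨!![0,1,0;1,0,0;0,2,2], by decide⟩ ⟨!![0,2,0;2,0,0;0,0,2], by decide⟩ (by rw [hval]; decide)
      · rw [h1, h2, h3] at hval
        exact mem_comm_of x ⟨!![0,1,0;1,0,0;0,0,2], by decide⟩ ⟨!![0,1,0;1,0,0;0,1,2], by decide⟩ (by rw [hval]; decide)
  · rcases hp with h2 | h2 | h2
    · rcases hq with h3 | h3 | h3
      · rw [h1, h2, h3] at hval
        exact mem_comm_of x ⟨!![0,1,0;1,0,0;0,0,2], by decide⟩ ⟨!![0,1,0;2,0,0;0,0,1], by decide⟩ (by rw [hval]; decide)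
      · rw [h1, h2, h3] at hval
        exact mem_comm_of x ⟨!![0,1,0;1,0,0;0,1,2], by decide⟩ ⟨!![0,2,0;1,0,0;0,1,1], by decide⟩ (by rw [hval]; decide)
      · rw [h1, h2, h3] at hval
        exact mem_comm_of x ⟨!![0,1,0;1,0,0;0,2,2], by decide⟩ ⟨!![0,2,0;1,0,0;0,2,1], by decide⟩ (by rw [hval]; decide)
    · rcases hq with h3 | h3 | h3
      · rw [h1, h2, h3] at hval
        exact mem_comm_of x ⟨!![0,1,0;1,0,0;0,1,2], by decide⟩ ⟨!![0,2,0;1,0,0;0,2,1], by decide⟩ (by rw [hval]; decide)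
      · rw [h1, h2, h3] at hval
        exact mem_comm_of x ⟨!![0,1,0;1,0,0;0,2,2], by decide⟩ ⟨!![0,2,0;1,0,0;0,0,1], by decide⟩ (by rw [hval]; decide)
      · rw [h1, h2, h3] at hval
        exact mem_comm_of x ⟨!![0,1,0;1,0,0;0,0,2], by decide⟩ ⟨!![0,1,0;2,0,0;0,2,1], by decide⟩ (by rw [hval]; decide)
    · rcases hq with h3 | h3 | h3
      · rw [h1, h2, h3] at hval
        exact mem_comm_of x ⟨!![0,1,0;1,0,0;0,2,2], by decide⟩ ⟨!![0,2,0;1,0,0;0,1,1], by decide⟩ (by rw [hval]; decide)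
      · rw [h1, h2, h3] at hval
        exact mem_comm_of x ⟨!![0,1,0;1,0,0;0,0,2], by decide⟩ ⟨!![0,1,0;2,0,0;0,1,1], by decide⟩ (by rw [hval]; decide)
      · rw [h1, h2, h3] at hval
        exact mem_comm_of x ⟨!![0,1,0;1,0,0;0,1,2], by decide⟩ ⟨!![0,2,0;1,0,0;0,0,1], by decide⟩ (by rw [hval]; decide)

lemma comm_eq_ker : commutator Ghat3 = MonoidHom.ker f :=
  le_antisymm (Abelianization.commutator_subset_ker f) ker_le_commutator

def kerEquiv : {d : ZMod 3 // d * d = 1} × (ZMod 3 × ZMod 3) ≃ ↥(MonoidHom.ker f) where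
  toFun z := ⟨⟨!![z.1.val, 0, 0; 0, z.1.val, 0; z.2.1, z.2.2, 1],
      family_cond z.1.val z.2.1 z.2.2 z.1.prop⟩, by
    rw [mem_ker_iff]
    refine ⟨rfl, ?_⟩
    show z.1.val ≠ 0
    intro hc
    have := z.1.prop
    rw [hc] at this
    simp at this⟩
  invFun x := ⟨⟨x.val.val 0 0, (ker_char x.val ((mem_ker_iff x.val).mp x.prop).1
      ((mem_ker_iff x.val).mp x.prop).2).2⟩, (x.val.val 2 0, x.val.val 2 1)⟩
  left_inv z := by
    refine Prod.ext (Subtype.ext ?_) (Prod.ext ?_ ?_) <;> rfl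
  right_inv x := by
    refine Subtype.ext (Subtype.ext ?_)
    exact (ker_char x.val ((mem_ker_iff x.val).mp x.prop).1
      ((mem_ker_iff x.val).mp x.prop).2).1.symm

lemma card_ker : Nat.card ↥(MonoidHom.ker f) = 18 := by
  rw [← Nat.card_congr kerEquiv]
  simp [Nat.card_eq_fintype_card]
  decide

lemma f_surjective : Function.Surjective f := by
  intro z
  have key : ∀ a b : ZMod 2, ∃ x : Ghat3, f x = Multiplicative.ofAdd (a, b) := by
    intro a b
    fin_cases a <;> fin_cases b
    · exact ⟨⟨!![1,0,0;0,1,0;0,0,1], by decide⟩, by decide⟩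
    · exact ⟨⟨!![0,2,0;1,0,0;0,0,1], by decide⟩, by decide⟩
    · exact ⟨⟨!![1,0,0;0,2,0;0,0,2], by decide⟩, by decide⟩
    · exact ⟨⟨!![0,1,0;1,0,0;0,0,2], by decide⟩, by decide⟩
  obtain ⟨x, hx⟩ := key (Multiplicative.toAdd z).1 (Multiplicative.toAdd z).2
  exact ⟨x, by rw [hx]; rfl⟩

noncomputable def abIso : Abelianization Ghat3 ≃* Multiplicative (ZMod 2 × ZMod 2) := by
  refine MulEquiv.ofBijective (Abelianization.lift f) ⟨?_, ?_⟩
  · rw [injective_iff_map_eq_one]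
    intro g hg
    induction g using QuotientGroup.induction_on with
    | _ x =>
      have hfx : f x = 1 := by rw [← Abelianization.lift_apply_of f x]; exact hg
      have hxc : x ∈ commutator Ghat3 := comm_eq_ker ▸ (MonoidHom.mem_ker).mpr hfx
      exact (QuotientGroup.eq_one_iff x).mpr hxc
  · intro z
    obtain ⟨x, hx⟩ := f_surjective z
    exact ⟨Abelianization.of x, by rw [Abelianization.lift_apply_of]; exact hx⟩

end GhatAux

theorem Ghat3_commutator_abelianization :
    ∃ _ : Group Ghat3,
      (∀ x y : Ghat3, (x * y).val = x.val * y.val) ∧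
      Nat.card (commutator Ghat3) = 18 ∧
      Nonempty (Abelianization Ghat3 ≃* Multiplicative (ZMod 2 × ZMod 2)) := by
  refine ⟨GhatAux.grp, GhatAux.mul_val, ?_, ⟨GhatAux.abIso⟩⟩
  rw [GhatAux.comm_eq_ker]
  exact GhatAux.card_ker
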